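/- Let K ∈ ℝ, m ∈ ℤ, and let v : ℤ → ℝ be such that there exist C < ∞ and c > 0 with |v(x) − K·|x − m|| ≤ C e^{−c|x|} for all x ∈ ℤ. Define S(x) = (v(x+1) − 2 v(x) + v(x−1))/8. Then the series ∑_{x∈ℤ} |x − m|·S(x) converges absolutely and ∑_{x∈ℤ} |x − m|·S(x) = v(m)/4. -/

import Mathlib

open Filter

lemma tent_second_diff (m x : ℤ) (h : x ≠ m) :
    |((x:ℝ)+1) - (m:ℝ)| - 2*|(x:ℝ) - (m:ℝ)| + |((x:ℝ)-1) - (m:ℝ)| = 0 := by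
  rcases h.lt_or_gt with hlt | hgt
  · have h1 : (x:ℝ) ≤ (m:ℝ) - 1 := by
      have : x + 1 ≤ m := hlt
      have h2 : ((x:ℝ) + 1 : ℝ) ≤ (m:ℝ) := by exact_mod_cast this
      linarith
    rw [abs_of_nonpos (by linarith), abs_of_nonpos (by linarith),
      abs_of_nonpos (by linarith)]; ring
  · have h1 : (m:ℝ) + 1 ≤ (x:ℝ) := by
      have : m + 1 ≤ x := hgt
      exact_mod_cast this
    rw [abs_of_nonneg (by linarith), abs_of_nonneg (by linarith),
      abs_of_nonneg (by linarith)]; ring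

lemma partial_sum_formula (m : ℤ) (w : ℤ → ℝ) (n : ℕ) :
    ∑ x ∈ Finset.Icc (m - (n:ℤ)) (m + (n:ℤ)),
      |(x:ℝ) - (m:ℝ)| * ((w (x+1) - 2 * w x + w (x-1)) / 8)
    = w m / 4 + ((n:ℝ) * w (m + n + 1) - ((n:ℝ)+1) * w (m + n)
        + (n:ℝ) * w (m - n - 1) - ((n:ℝ)+1) * w (m - n)) / 8 := by
  induction n with
  | zero => simp; ring
  | succ n ih =>
    have e1 : Finset.Icc (m - ((n:ℤ)+1)) (m + ((n:ℤ)+1))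
        = insert (m - (n:ℤ) - 1) (insert (m + (n:ℤ) + 1) (Finset.Icc (m - (n:ℤ)) (m + (n:ℤ)))) := by
      ext x; simp [Finset.mem_Icc]; omega
    push_cast
    rw [e1, Finset.sum_insert (by simp only [Finset.mem_insert, Finset.mem_Icc]; omega),
      Finset.sum_insert (by simp only [Finset.mem_Icc]; omega), ih]
    have a1 : |((↑(m - (n:ℤ) - 1) : ℝ)) - (m:ℝ)| = (n:ℝ) + 1 := by
      push_cast; rw [abs_of_nonpos (by linarith [Nat.cast_nonneg (α := ℝ) n])]; ring
    have a2 : |((↑(m + (n:ℤ) + 1) : ℝ)) - (m:ℝ)| = (n:ℝ) + 1 := by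
      push_cast; rw [abs_of_nonneg (by linarith [Nat.cast_nonneg (α := ℝ) n])]; ring
    rw [a1, a2]
    have i1 : m - (n:ℤ) - 1 + 1 = m - n := by ring
    have i2 : m - (n:ℤ) - 1 - 1 = m - (n:ℤ) - 2 := by ring
    have i3 : m + (n:ℤ) + 1 + 1 = m + (n:ℤ) + 2 := by ring
    have i4 : m + (n:ℤ) + 1 - 1 = m + n := by ring
    have i5 : m + ((n:ℤ)+1) + 1 = m + (n:ℤ) + 2 := by ring
    have i6 : m + ((n:ℤ)+1) = m + (n:ℤ) + 1 := by ring
    have i7 : m - ((n:ℤ)+1) - 1 = m - (n:ℤ) - 2 := by ring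
    have i8 : m - ((n:ℤ)+1) = m - (n:ℤ) - 1 := by ring
    rw [i1, i2, i3, i4, i5, i6, i7, i8]
    ring

lemma wdecay_bound (C₀ c : ℝ) (hC₀ : 0 ≤ C₀) (hc : 0 < c) (u A : ℝ)
    (hu : |u| ≤ C₀ * Real.exp (-c * |A|)) (n mA : ℝ) (h : n ≤ |A| + mA) :
    |u| ≤ C₀ * Real.exp (c * mA) * Real.exp (-c * n) := by
  have hcn : c * n ≤ c * (|A| + mA) := mul_le_mul_of_nonneg_left h hc.le
  have h2 : Real.exp (-c * |A|) ≤ Real.exp (c * mA + -c * n) := by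
    apply Real.exp_le_exp.2; nlinarith
  calc |u| ≤ C₀ * Real.exp (-c * |A|) := hu
    _ ≤ C₀ * (Real.exp (c * mA) * Real.exp (-c * n)) := by
        rw [← Real.exp_add]; exact mul_le_mul_of_nonneg_left h2 hC₀
    _ = _ := by ring

lemma abs_sub_le_abs_add_abs' (a b : ℝ) : |a - b| ≤ |a| + |b| := by
  rw [sub_eq_add_neg]; exact (abs_add_le _ _).trans (by rw [abs_neg])

lemma second_diff_abs_le (a b d : ℝ) : |a - 2*b + d| ≤ |a| + 2*|b| + |d| := by
  have h1 := abs_add_le (a - 2*b) d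
  have h2 := abs_sub_le_abs_add_abs' a (2*b)
  have h3 : |2*b| = 2*|b| := by rw [abs_mul]; norm_num
  linarith

lemma summable_aux (a D r : ℝ) (hr0 : 0 ≤ r) (hr1 : r < 1) :
    Summable (fun x : ℤ => ((x.natAbs : ℝ) + a) * D * r ^ x.natAbs) := by
  have hG : Summable (fun n : ℕ => ((n : ℝ) + a) * D * r ^ n) := by
    have hnr : ‖r‖ < 1 := by rwa [Real.norm_eq_abs, abs_of_nonneg hr0]
    have S1 : Summable (fun n : ℕ => (n : ℝ) * r ^ n) := by
      have := summable_pow_mul_geometric_of_norm_lt_one (R := ℝ) 1 hnr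
      simpa using this
    have S2 : Summable (fun n : ℕ => r ^ n) := summable_geometric_of_lt_one hr0 hr1
    have := ((S1.add (S2.mul_left a)).mul_left D)
    exact this.congr (by intro n; ring)
  apply Summable.of_nat_of_neg_add_one
  · exact hG.congr (by intro n; simp)
  · refine (hG.comp_injective (add_left_injective 1)).congr fun n => ?_
    have h : (-((n:ℤ) + 1)).natAbs = n + 1 := by omega
    simp only [Function.comp_apply, h]

lemma exhaustion (m : ℤ) :
    Tendsto (fun n : ℕ => Finset.Icc (m - (n:ℤ)) (m + (n:ℤ))) atTop atTop := by
  apply tendsto_atTop_finset_of_monotone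
  · intro a b hab
    apply Finset.Icc_subset_Icc <;> omega
  · intro x
    exact ⟨(x - m).natAbs, by simp only [Finset.mem_Icc]; omega⟩

lemma tends_aux (D r : ℝ) (hr0 : 0 ≤ r) (hr1 : r < 1) :
    Tendsto (fun n : ℕ => (4*(n:ℝ)+4) * D * r ^ n) atTop (nhds 0) := by
  have hnr : ‖r‖ < 1 := by rwa [Real.norm_eq_abs, abs_of_nonneg hr0]
  have S1 : Summable (fun n : ℕ => (n : ℝ) * r ^ n) := by
    have := summable_pow_mul_geometric_of_norm_lt_one (R := ℝ) 1 hnr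
    simpa using this
  have S2 : Summable (fun n : ℕ => r ^ n) := summable_geometric_of_lt_one hr0 hr1
  have := (((S1.mul_left (4*D)).add (S2.mul_left (4*D))).congr
    (g := fun n : ℕ => (4*(n:ℝ)+4) * D * r ^ n) (by intro n; ring))
  exact this.tendsto_atTop_zero

theorem abs_moment_of_second_difference (K : ℝ) (m : ℤ) (v : ℤ → ℝ)
    (C c : ℝ) (hc : 0 < c)
    (hv : ∀ x : ℤ, abs (v x - K * |(x : ℝ) - (m : ℝ)|) ≤ C * Real.exp (-c * |(x : ℝ)|))
    (S : ℤ → ℝ) (hS : ∀ x : ℤ, S x = (v (x + 1) - 2 * v x + v (x - 1)) / 8) :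
    Summable (fun x : ℤ => |(x : ℝ) - (m : ℝ)| * S x) ∧
      ∑' x : ℤ, |(x : ℝ) - (m : ℝ)| * S x = v m / 4 := by
  set w : ℤ → ℝ := fun x => v x - K * |(x:ℝ) - (m:ℝ)| with hwdef
  set C₀ : ℝ := max C 0 with hC₀def
  have hC₀ : 0 ≤ C₀ := le_max_right _ _
  have hw : ∀ x : ℤ, |w x| ≤ C₀ * Real.exp (-c * |(x:ℝ)|) := by
    intro x
    calc |w x| ≤ C * Real.exp (-c * |(x:ℝ)|) := hv x
      _ ≤ C₀ * Real.exp (-c * |(x:ℝ)|) :=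
        mul_le_mul_of_nonneg_right (le_max_left _ _) (Real.exp_pos _).le
  set f : ℤ → ℝ := fun x => |(x:ℝ) - (m:ℝ)| * ((w (x+1) - 2 * w x + w (x-1)) / 8) with hfdef
  -- pointwise identification
  have hfeq : ∀ x : ℤ, f x = |(x:ℝ) - (m:ℝ)| * S x := by
    intro x
    by_cases hxm : x = m
    · subst hxm; simp [hfdef]
    · have ht := tent_second_diff m x hxm
      rw [hS x]
      simp only [hfdef, hwdef]
      push_cast
      linear_combination (-(|(x:ℝ) - (m:ℝ)| * K) / 8) * ht
  -- summability
  set r : ℝ := Real.exp (-c) with hrdef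
  have hr0 : 0 ≤ r := (Real.exp_pos _).le
  have hr1 : r < 1 := Real.exp_lt_one_iff.mpr (by linarith)
  set g : ℤ → ℝ := fun x => ((x.natAbs : ℝ) + |(m:ℝ)|) * (C₀ * Real.exp c / 2) * r ^ x.natAbs
    with hgdef
  have hbound : ∀ x : ℤ, ‖f x‖ ≤ g x := by
    intro x
    have hxabs : ((x.natAbs : ℝ)) = |(x:ℝ)| := by
      rw [Nat.cast_natAbs]; push_cast; ring
    have b1 : |w (x+1)| ≤ C₀ * Real.exp (c * 1) * Real.exp (-c * |(x:ℝ)|) := by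
      refine wdecay_bound C₀ c hC₀ hc (w (x+1)) ((x:ℝ)+1) ?_ (|(x:ℝ)|) 1 ?_
      · have := hw (x+1); push_cast at this ⊢; exact this
      · have := abs_sub_le_abs_add_abs' ((x:ℝ)+1) 1
        simp only [abs_one] at this
        calc |(x:ℝ)| = |((x:ℝ)+1) - 1| := by norm_num
          _ ≤ |(x:ℝ)+1| + 1 := this
    have b2 : |w x| ≤ C₀ * Real.exp (c * 1) * Real.exp (-c * |(x:ℝ)|) := by
      refine wdecay_bound C₀ c hC₀ hc _ _ (hw x) _ _ (by linarith [abs_nonneg ((x:ℝ))])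
    have b3 : |w (x-1)| ≤ C₀ * Real.exp (c * 1) * Real.exp (-c * |(x:ℝ)|) := by
      refine wdecay_bound C₀ c hC₀ hc (w (x-1)) ((x:ℝ)-1) ?_ (|(x:ℝ)|) 1 ?_
      · have := hw (x-1); push_cast at this ⊢; exact this
      · have := abs_add_le ((x:ℝ)-1) 1
        calc |(x:ℝ)| = |((x:ℝ)-1) + 1| := by norm_num
          _ ≤ |(x:ℝ)-1| + |(1:ℝ)| := this
          _ = |(x:ℝ)-1| + 1 := by rw [abs_one]
    have htri := second_diff_abs_le (w (x+1)) (w x) (w (x-1))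
    have hA : |w (x+1) - 2 * w x + w (x-1)| ≤ 4 * (C₀ * Real.exp (c*1) * Real.exp (-c * |(x:ℝ)|)) := by
      linarith
    have hwt : |(x:ℝ) - (m:ℝ)| ≤ |(x:ℝ)| + |(m:ℝ)| := abs_sub_le_abs_add_abs' _ _
    have hnorm : ‖f x‖ = |(x:ℝ) - (m:ℝ)| * (|w (x+1) - 2 * w x + w (x-1)| / 8) := by
      rw [Real.norm_eq_abs, hfdef]
      rw [abs_mul, abs_abs, abs_div]
      norm_num
    rw [hnorm]
    have step : |(x:ℝ) - (m:ℝ)| * (|w (x+1) - 2 * w x + w (x-1)| / 8)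
        ≤ (|(x:ℝ)| + |(m:ℝ)|) * ((4 * (C₀ * Real.exp (c*1) * Real.exp (-c * |(x:ℝ)|))) / 8) := by
      apply mul_le_mul hwt (by linarith) (by positivity) (by positivity)
    refine step.trans (le_of_eq ?_)
    have hE : Real.exp (-c * |(x:ℝ)|) = r ^ x.natAbs := by
      rw [hrdef, ← Real.exp_nat_mul]
      congr 1
      rw [← hxabs]; ring
    rw [hgdef, hE, ← hxabs, mul_one]
    ring
  have hg_sum : Summable g := summable_aux (|(m:ℝ)|) (C₀ * Real.exp c / 2) r hr0 hr1
  have hf_sum : Summable f := hg_sum.of_norm_bounded hbound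
  have hsum : Summable (fun x : ℤ => |(x:ℝ) - (m:ℝ)| * S x) := hf_sum.congr hfeq
  refine ⟨hsum, ?_⟩
  -- the limit of partial sums
  have hhs : Tendsto (fun n : ℕ => ∑ x ∈ Finset.Icc (m - (n:ℤ)) (m + (n:ℤ)), f x)
      atTop (nhds (∑' x : ℤ, f x)) := hf_sum.hasSum.comp (exhaustion m)
  -- boundary terms go to 0
  set B : ℕ → ℝ := fun n => (n:ℝ) * w (m + n + 1) - ((n:ℝ)+1) * w (m + n)
      + (n:ℝ) * w (m - n - 1) - ((n:ℝ)+1) * w (m - n) with hBdef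
  have hB : Tendsto B atTop (nhds 0) := by
    refine squeeze_zero_norm (a := fun n : ℕ => (4*(n:ℝ)+4) * (C₀ * Real.exp (c * |(m:ℝ)|)) * r ^ n) (fun n => ?_) ?_
    · 
      have key : ∀ y : ℤ, ((n:ℝ) ≤ |(y:ℝ)| + |(m:ℝ)|) →
          |w y| ≤ C₀ * Real.exp (c * |(m:ℝ)|) * r ^ n := by
        intro y hy
        have := wdecay_bound C₀ c hC₀ hc (w y) ((y:ℝ)) (hw y) (n:ℝ) (|(m:ℝ)|) hy
        have hE : Real.exp (-c * (n:ℝ)) = r ^ n := by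
          rw [hrdef, ← Real.exp_nat_mul]; congr 1; ring
        rwa [hE] at this
      have k1 : |w (m + n + 1)| ≤ C₀ * Real.exp (c * |(m:ℝ)|) * r ^ n := by
        apply key; push_cast
        have h1 := abs_add_le ((m:ℝ)+(n:ℝ)+1) (-(m:ℝ))
        rw [abs_neg] at h1
        have h2 : |((m:ℝ)+(n:ℝ)+1) + -(m:ℝ)| = (n:ℝ)+1 := by
          rw [show ((m:ℝ)+(n:ℝ)+1) + -(m:ℝ) = (n:ℝ)+1 by ring,
            abs_of_nonneg (by positivity)]
        linarith
      have k2 : |w (m + n)| ≤ C₀ * Real.exp (c * |(m:ℝ)|) * r ^ n := by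
        apply key; push_cast
        have h1 := abs_add_le ((m:ℝ)+(n:ℝ)) (-(m:ℝ))
        rw [abs_neg] at h1
        have h2 : |((m:ℝ)+(n:ℝ)) + -(m:ℝ)| = (n:ℝ) := by
          rw [show ((m:ℝ)+(n:ℝ)) + -(m:ℝ) = (n:ℝ) by ring,
            abs_of_nonneg (by positivity)]
        linarith
      have k3 : |w (m - n - 1)| ≤ C₀ * Real.exp (c * |(m:ℝ)|) * r ^ n := by
        apply key; push_cast
        have h1 := abs_add_le ((m:ℝ)) (-((m:ℝ)-(n:ℝ)-1))
        rw [abs_neg] at h1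
        have h2 : |(m:ℝ) + -((m:ℝ)-(n:ℝ)-1)| = (n:ℝ)+1 := by
          rw [show (m:ℝ) + -((m:ℝ)-(n:ℝ)-1) = (n:ℝ)+1 by ring,
            abs_of_nonneg (by positivity)]
        linarith
      have k4 : |w (m - n)| ≤ C₀ * Real.exp (c * |(m:ℝ)|) * r ^ n := by
        apply key; push_cast
        have h2 : |((m:ℝ)-(n:ℝ)) - (m:ℝ)| = (n:ℝ) := by
          rw [show ((m:ℝ)-(n:ℝ)) - (m:ℝ) = -(n:ℝ) by ring, abs_neg,
            abs_of_nonneg (by positivity)]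
        have h1 := abs_sub_le_abs_add_abs' ((m:ℝ)-(n:ℝ)) ((m:ℝ))
        linarith [h2 ▸ h1]
      have hM : 0 ≤ C₀ * Real.exp (c * |(m:ℝ)|) * r ^ n := by positivity
      have hn0 : (0:ℝ) ≤ (n:ℝ) := Nat.cast_nonneg n
      rw [Real.norm_eq_abs, hBdef]
      have t1 : |(n:ℝ) * w (m + n + 1)| ≤ (n:ℝ) * (C₀ * Real.exp (c * |(m:ℝ)|) * r ^ n) := by
        rw [abs_mul, abs_of_nonneg hn0]
        exact mul_le_mul_of_nonneg_left k1 hn0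
      have t2 : |((n:ℝ)+1) * w (m + n)| ≤ ((n:ℝ)+1) * (C₀ * Real.exp (c * |(m:ℝ)|) * r ^ n) := by
        rw [abs_mul, abs_of_nonneg (by linarith)]
        exact mul_le_mul_of_nonneg_left k2 (by linarith)
      have t3 : |(n:ℝ) * w (m - n - 1)| ≤ (n:ℝ) * (C₀ * Real.exp (c * |(m:ℝ)|) * r ^ n) := by
        rw [abs_mul, abs_of_nonneg hn0]
        exact mul_le_mul_of_nonneg_left k3 hn0
      have t4 : |((n:ℝ)+1) * w (m - n)| ≤ ((n:ℝ)+1) * (C₀ * Real.exp (c * |(m:ℝ)|) * r ^ n) := by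
        rw [abs_mul, abs_of_nonneg (by linarith)]
        exact mul_le_mul_of_nonneg_left k4 (by linarith)
      have htr : |(n:ℝ) * w (m + n + 1) - ((n:ℝ)+1) * w (m + n)
          + (n:ℝ) * w (m - n - 1) - ((n:ℝ)+1) * w (m - n)|
          ≤ |(n:ℝ) * w (m + n + 1)| + |((n:ℝ)+1) * w (m + n)|
            + |(n:ℝ) * w (m - n - 1)| + |((n:ℝ)+1) * w (m - n)| := by
        have u1 := abs_sub_le_abs_add_abs'
          ((n:ℝ) * w (m + n + 1) - ((n:ℝ)+1) * w (m + n) + (n:ℝ) * w (m - n - 1))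
          (((n:ℝ)+1) * w (m - n))
        have u2 := abs_add_le ((n:ℝ) * w (m + n + 1) - ((n:ℝ)+1) * w (m + n))
          ((n:ℝ) * w (m - n - 1))
        have u3 := abs_sub_le_abs_add_abs' ((n:ℝ) * w (m + n + 1)) (((n:ℝ)+1) * w (m + n))
        linarith
      calc |(n:ℝ) * w (m + n + 1) - ((n:ℝ)+1) * w (m + n)
          + (n:ℝ) * w (m - n - 1) - ((n:ℝ)+1) * w (m - n)|
          ≤ |(n:ℝ) * w (m + n + 1)| + |((n:ℝ)+1) * w (m + n)|
            + |(n:ℝ) * w (m - n - 1)| + |((n:ℝ)+1) * w (m - n)| := htr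
        _ ≤ (n:ℝ) * (C₀ * Real.exp (c * |(m:ℝ)|) * r ^ n)
            + ((n:ℝ)+1) * (C₀ * Real.exp (c * |(m:ℝ)|) * r ^ n)
            + (n:ℝ) * (C₀ * Real.exp (c * |(m:ℝ)|) * r ^ n)
            + ((n:ℝ)+1) * (C₀ * Real.exp (c * |(m:ℝ)|) * r ^ n) := by linarith
        _ = (4*(n:ℝ)+4) * (C₀ * Real.exp (c * |(m:ℝ)|)) * r ^ n - 2 * (C₀ * Real.exp (c * |(m:ℝ)|) * r ^ n) := by ring
        _ ≤ (4*(n:ℝ)+4) * (C₀ * Real.exp (c * |(m:ℝ)|)) * r ^ n := by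
            linarith [hM]
    · exact tends_aux (C₀ * Real.exp (c * |(m:ℝ)|)) r hr0 hr1
  -- combine
  have hPS : (fun n : ℕ => ∑ x ∈ Finset.Icc (m - (n:ℤ)) (m + (n:ℤ)), f x)
      = fun n : ℕ => w m / 4 + B n / 8 := by
    funext n
    rw [hfdef]
    exact partial_sum_formula m w n
  have hlim2 : Tendsto (fun n : ℕ => w m / 4 + B n / 8) atTop (nhds (w m / 4)) := by
    have : Tendsto (fun n : ℕ => B n / 8) atTop (nhds 0) := by
      simpa using hB.div_const 8
    have := tendsto_const_nhds (x := w m / 4) (f := atTop (α := ℕ)) |>.add this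
    simpa using this
  rw [hPS] at hhs
  have hts : (∑' x : ℤ, f x) = w m / 4 := tendsto_nhds_unique hhs hlim2
  have : (∑' x : ℤ, |(x:ℝ) - (m:ℝ)| * S x) = ∑' x : ℤ, f x :=
    tsum_congr (fun x => (hfeq x).symm)
  rw [this, hts, hwdef]
  simp
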